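/- Let Λ < π² be a real number and let f : [0,1] → ℝ be continuous on [0,1], twice continuously differentiable on (0,1), and nonnegative. Suppose that for all s₀, s₁ ∈ [0,1] one has the midpoint inequality f((s₀+s₁)/2) ≤ σ_Λ^{(1/2)}(|s₀−s₁|) (f(s₀) + f(s₁)). Then f''(t) + Λ f(t) ≥ 0 for every t ∈ (0,1). -/

import Mathlib

/-- Distortion coefficient `σ_Λ^{(t)}(θ)`. -/
noncomputable def sigmaCoeff (Λ t θ : ℝ) : ℝ :=
  if Λ * θ ^ 2 = 0 then t
  else if 0 < Λ * θ ^ 2 then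
    Real.sin (t * (θ * Real.sqrt Λ)) / Real.sin (θ * Real.sqrt Λ)
  else
    Real.sinh (t * (θ * Real.sqrt (-Λ))) / Real.sinh (θ * Real.sqrt (-Λ))

/-- Auxiliary contradiction lemma: if `f(t+h)+f(t-h) - 2 c(h) f(t) ≥ 0` for small
positive `h`, where `c(0)=1`, `c'(0)=0`, then `f''(t) - c''(0) f(t) ≥ 0`. -/
lemma aux_contra (f f' f'' : ℝ → ℝ) (t : ℝ) (ht0 : 0 < t) (ht1 : t < 1)
    (hf' : ∀ x ∈ Set.Ioo (0 : ℝ) 1, HasDerivAt f (f' x) x)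
    (hf'' : ∀ x ∈ Set.Ioo (0 : ℝ) 1, HasDerivAt f' (f'' x) x)
    (hf''cont : ContinuousOn f'' (Set.Ioo 0 1))
    (c c1 c2 : ℝ → ℝ)
    (hc : ∀ x, HasDerivAt c (c1 x) x)
    (hc1 : ∀ x, HasDerivAt c1 (c2 x) x)
    (hc2 : Continuous c2)
    (hc0 : c 0 = 1) (hc10 : c1 0 = 0)
    (δ : ℝ) (hδ : 0 < δ)
    (hineq : ∀ h ∈ Set.Ioc (0 : ℝ) δ, 0 ≤ f (t + h) + f (t - h) - 2 * c h * f t)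
    (hneg : f'' t - c2 0 * f t < 0) : False := by
  set m := min t (1 - t) with hm
  have hm0 : 0 < m := lt_min ht0 (by linarith)
  have hmt : m ≤ t := min_le_left _ _
  have hmt1 : m ≤ 1 - t := min_le_right _ _
  have hmem : ∀ h : ℝ, h ∈ Set.Ioo (-m) m →
      t + h ∈ Set.Ioo (0 : ℝ) 1 ∧ t - h ∈ Set.Ioo (0 : ℝ) 1 := by
    intro h ⟨h1, h2⟩
    exact ⟨⟨by linarith, by linarith⟩, ⟨by linarith, by linarith⟩⟩
  set G : ℝ → ℝ := fun h => f (t + h) + f (t - h) - 2 * c h * f t with hG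
  set G1 : ℝ → ℝ := fun h => f' (t + h) - f' (t - h) - 2 * c1 h * f t with hG1
  set G2 : ℝ → ℝ := fun h => f'' (t + h) + f'' (t - h) - 2 * c2 h * f t with hG2
  -- derivatives of G and G1
  have hplus : ∀ h : ℝ, HasDerivAt (fun x : ℝ => t + x) 1 h := by
    intro h
    simpa using (hasDerivAt_id h).const_add t
  have hminus : ∀ h : ℝ, HasDerivAt (fun x : ℝ => t - x) (-1) h := by
    intro h
    simpa using (hasDerivAt_id h).const_sub t
  have hGd : ∀ h ∈ Set.Ioo (-m) m, HasDerivAt G (G1 h) h := by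
    intro h hh
    obtain ⟨hp, hq⟩ := hmem h hh
    have h1 : HasDerivAt (fun x => f (t + x)) (f' (t + h) * 1) h :=
      (hf' _ hp).comp h (hplus h)
    have h2 : HasDerivAt (fun x => f (t - x)) (f' (t - h) * (-1)) h :=
      (hf' _ hq).comp h (hminus h)
    have h3 : HasDerivAt (fun x => 2 * c x * f t) (2 * c1 h * f t) h := by
      simpa [mul_comm, mul_assoc, mul_left_comm] using ((hc h).const_mul 2).mul_const (f t)
    have := (h1.add h2).sub h3
    refine this.congr_deriv ?_
    simp [hG1]; ring
  have hG1d : ∀ h ∈ Set.Ioo (-m) m, HasDerivAt G1 (G2 h) h := by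
    intro h hh
    obtain ⟨hp, hq⟩ := hmem h hh
    have h1 : HasDerivAt (fun x => f' (t + x)) (f'' (t + h) * 1) h :=
      (hf'' _ hp).comp h (hplus h)
    have h2 : HasDerivAt (fun x => f' (t - x)) (f'' (t - h) * (-1)) h :=
      (hf'' _ hq).comp h (hminus h)
    have h3 : HasDerivAt (fun x => 2 * c1 x * f t) (2 * c2 h * f t) h := by
      simpa [mul_comm, mul_assoc, mul_left_comm] using ((hc1 h).const_mul 2).mul_const (f t)
    have := (h1.sub h2).sub h3
    refine this.congr_deriv ?_
    simp only [hG2]; ring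
  -- continuity of G2 and negativity near 0
  have hG2cont : ContinuousOn G2 (Set.Ioo (-m) m) := by
    have hcp : ContinuousOn (fun h : ℝ => f'' (t + h)) (Set.Ioo (-m) m) :=
      hf''cont.comp (continuous_const.add continuous_id).continuousOn
        (fun h hh => (hmem h hh).1)
    have hcq : ContinuousOn (fun h : ℝ => f'' (t - h)) (Set.Ioo (-m) m) :=
      hf''cont.comp (continuous_const.sub continuous_id).continuousOn
        (fun h hh => (hmem h hh).2)
    exact (hcp.add hcq).sub
      (((continuous_const.mul hc2).mul continuous_const).continuousOn)
  have h0mem : (0 : ℝ) ∈ Set.Ioo (-m) m := ⟨by linarith, hm0⟩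
  have hG2at : ContinuousAt G2 0 :=
    hG2cont.continuousAt (isOpen_Ioo.mem_nhds h0mem)
  have hG20 : G2 0 < 0 := by
    simp only [hG2, add_zero, sub_zero]
    linarith
  have hev : ∀ᶠ h in nhds (0 : ℝ), G2 h < 0 :=
    hG2at.eventually_lt continuousAt_const (by simpa using hG20)
  obtain ⟨ε, hε0, hε⟩ := Metric.eventually_nhds_iff.mp hev
  set r : ℝ := min (ε / 2) (min δ (m / 2)) with hr
  have hr0 : 0 < r := lt_min (by linarith) (lt_min hδ (by linarith))
  have hrε : r < ε := lt_of_le_of_lt (min_le_left _ _) (by linarith)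
  have hrδ : r ≤ δ := le_trans (min_le_right _ _) (min_le_left _ _)
  have hrm : r < m := lt_of_le_of_lt (le_trans (min_le_right _ _) (min_le_right _ _)) (by linarith)
  have hsub : Set.Icc (0 : ℝ) r ⊆ Set.Ioo (-m) m := by
    intro x ⟨hx1, hx2⟩
    exact ⟨by linarith, by linarith⟩
  have hG2neg : ∀ x ∈ Set.Icc (0 : ℝ) r, G2 x < 0 := by
    intro x ⟨hx1, hx2⟩
    apply hε
    rw [Real.dist_eq]
    rw [abs_of_nonneg (by linarith : (0:ℝ) ≤ x - 0)]
    linarith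
  -- G1 is strictly decreasing on [0, r]
  have hG1anti : StrictAntiOn G1 (Set.Icc 0 r) := by
    apply strictAntiOn_of_deriv_neg (convex_Icc 0 r)
    · exact fun x hx => ((hG1d x (hsub hx)).continuousAt).continuousWithinAt
    · intro x hx
      rw [interior_Icc] at hx
      rw [(hG1d x (hsub ⟨hx.1.le, hx.2.le⟩)).deriv]
      exact hG2neg x ⟨hx.1.le, hx.2.le⟩
  have hG10 : G1 0 = 0 := by simp [hG1, hc10]
  have hG1neg : ∀ x ∈ Set.Icc (0 : ℝ) r, x ≠ 0 → G1 x < 0 := by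
    intro x hx hxne
    have := hG1anti (Set.left_mem_Icc.mpr hr0.le) hx (lt_of_le_of_ne hx.1 (Ne.symm hxne))
    rwa [hG10] at this
  -- G is strictly decreasing on [0, r]
  have hGanti : StrictAntiOn G (Set.Icc 0 r) := by
    apply strictAntiOn_of_deriv_neg (convex_Icc 0 r)
    · exact fun x hx => ((hGd x (hsub hx)).continuousAt).continuousWithinAt
    · intro x hx
      rw [interior_Icc] at hx
      rw [(hGd x (hsub ⟨hx.1.le, hx.2.le⟩)).deriv]
      exact hG1neg x ⟨hx.1.le, hx.2.le⟩ (ne_of_gt hx.1)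
  have hGr : G r < G 0 :=
    hGanti (Set.left_mem_Icc.mpr hr0.le) (Set.right_mem_Icc.mpr hr0.le) hr0
  have hG0 : G 0 = 0 := by simp [hG, hc0]; ring
  have := hineq r ⟨hr0, hrδ⟩
  rw [hG0] at hGr
  exact absurd this (not_le.mpr hGr)

/-- Backward direction: the midpoint `σ`-concavity inequality implies the
differential inequality `f'' + Λ f ≥ 0` on `(0,1)`. -/
theorem stmt_2 (Λ : ℝ) (hΛ : Λ < Real.pi ^ 2)
    (f f' f'' : ℝ → ℝ)
    (hf : ContinuousOn f (Set.Icc 0 1))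
    (hf' : ∀ t ∈ Set.Ioo (0 : ℝ) 1, HasDerivAt f (f' t) t)
    (hf'' : ∀ t ∈ Set.Ioo (0 : ℝ) 1, HasDerivAt f' (f'' t) t)
    (hf''cont : ContinuousOn f'' (Set.Ioo 0 1))
    (hfnonneg : ∀ t ∈ Set.Icc (0 : ℝ) 1, 0 ≤ f t)
    (hmid : ∀ s₀ ∈ Set.Icc (0 : ℝ) 1, ∀ s₁ ∈ Set.Icc (0 : ℝ) 1,
      f ((s₀ + s₁) / 2) ≤ sigmaCoeff Λ (1 / 2) |s₀ - s₁| * (f s₀ + f s₁)) :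
    ∀ t ∈ Set.Ioo (0 : ℝ) 1, 0 ≤ f'' t + Λ * f t := by
  intro t ht
  by_contra hcon
  push_neg at hcon
  obtain ⟨ht0, ht1⟩ := ht
  rcases lt_trichotomy Λ 0 with hΛ0 | hΛ0 | hΛ0
  · -- Λ < 0 : use c h = cosh (h * √(-Λ))
    set a := Real.sqrt (-Λ) with ha
    have ha2 : a * a = -Λ := Real.mul_self_sqrt (by linarith)
    have ha0 : 0 < a := Real.sqrt_pos.mpr (by linarith)
    refine aux_contra f f' f'' t ht0 ht1 hf' hf'' hf''cont
      (fun h => Real.cosh (h * a)) (fun h => Real.sinh (h * a) * a)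
      (fun h => Real.cosh (h * a) * a * a)
      (fun x => by have := (Real.hasDerivAt_cosh (x * a)).comp x (hasDerivAt_mul_const a); exact this)
      (fun x => by have := ((Real.hasDerivAt_sinh (x * a)).comp x (hasDerivAt_mul_const a)).mul_const a; exact this)
      (by fun_prop) (by simp) (by simp)
      (min t (1 - t)) (lt_min ht0 (by linarith)) ?_ ?_
    · intro h ⟨hh0, hhδ⟩
      have hht : h ≤ t := le_trans hhδ (min_le_left _ _)
      have hht1 : h ≤ 1 - t := le_trans hhδ (min_le_right _ _)
      have hs0 : t - h ∈ Set.Icc (0 : ℝ) 1 := ⟨by linarith, by linarith⟩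
      have hs1 : t + h ∈ Set.Icc (0 : ℝ) 1 := ⟨by linarith, by linarith⟩
      have hkey := hmid (t - h) hs0 (t + h) hs1
      rw [show (t - h + (t + h)) / 2 = t by ring,
        show |t - h - (t + h)| = 2 * h by
          rw [show t - h - (t + h) = -(2 * h) by ring, abs_neg, abs_of_pos (by linarith)]]
        at hkey
      have hσ : sigmaCoeff Λ (1 / 2) (2 * h) = 1 / (2 * Real.cosh (h * a)) := by
        have hsq : (0 : ℝ) < (2 * h) ^ 2 := by positivity
        have hne : Λ * (2 * h) ^ 2 < 0 := mul_neg_of_neg_of_pos hΛ0 hsq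
        rw [sigmaCoeff, if_neg (ne_of_lt hne), if_neg (not_lt.mpr hne.le)]
        rw [show (1 / 2 : ℝ) * (2 * h * Real.sqrt (-Λ)) = h * a by rw [← ha]; ring,
          show 2 * h * Real.sqrt (-Λ) = 2 * (h * a) by rw [← ha]; ring,
          Real.sinh_two_mul]
        have hs : 0 < Real.sinh (h * a) := Real.sinh_pos_iff.mpr (by positivity)
        have hcs : 0 < Real.cosh (h * a) := Real.cosh_pos _
        field_simp
      rw [hσ] at hkey
      have hcs : 0 < 2 * Real.cosh (h * a) := by positivity
      rw [one_div, inv_mul_eq_div, le_div_iff₀ hcs] at hkey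
      nlinarith
    · show f'' t - Real.cosh (0 * a) * a * a * f t < 0
      have : Real.cosh (0 * a) * a * a = -Λ := by simp [ha2]
      rw [this]; linarith
  · -- Λ = 0 : use c = 1
    subst hΛ0
    refine aux_contra f f' f'' t ht0 ht1 hf' hf'' hf''cont
      (fun _ => 1) (fun _ => 0) (fun _ => 0)
      (fun x => hasDerivAt_const x 1) (fun x => hasDerivAt_const x 0)
      continuous_const rfl rfl
      (min t (1 - t)) (lt_min ht0 (by linarith)) ?_ ?_
    · intro h ⟨hh0, hhδ⟩
      have hht : h ≤ t := le_trans hhδ (min_le_left _ _)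
      have hht1 : h ≤ 1 - t := le_trans hhδ (min_le_right _ _)
      have hs0 : t - h ∈ Set.Icc (0 : ℝ) 1 := ⟨by linarith, by linarith⟩
      have hs1 : t + h ∈ Set.Icc (0 : ℝ) 1 := ⟨by linarith, by linarith⟩
      have hkey := hmid (t - h) hs0 (t + h) hs1
      rw [show (t - h + (t + h)) / 2 = t by ring] at hkey
      rw [show sigmaCoeff 0 (1 / 2) |t - h - (t + h)| = 1 / 2 by
        rw [sigmaCoeff, if_pos (by ring)]] at hkey
      show 0 ≤ f (t + h) + f (t - h) - 2 * 1 * f t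
      linarith
    · simpa using (by linarith : f'' t + 0 * f t < 0)
  · -- Λ > 0 : use c h = cos (h * √Λ)
    set a := Real.sqrt Λ with ha
    have ha2 : a * a = Λ := Real.mul_self_sqrt (by linarith)
    have ha0 : 0 < a := Real.sqrt_pos.mpr hΛ0
    refine aux_contra f f' f'' t ht0 ht1 hf' hf'' hf''cont
      (fun h => Real.cos (h * a)) (fun h => -Real.sin (h * a) * a)
      (fun h => -(Real.cos (h * a) * a) * a)
      (fun x => by
        have := (Real.hasDerivAt_cos (x * a)).comp x (hasDerivAt_mul_const a); exact this)
      (fun x => by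
        have h1 : HasDerivAt (fun h => Real.sin (h * a)) (Real.cos (x * a) * a) x :=
          by have := (Real.hasDerivAt_sin (x * a)).comp x (hasDerivAt_mul_const a); exact this
        simpa [neg_mul] using (h1.neg).mul_const a)
      (by fun_prop) (by simp) (by simp)
      (min (min t (1 - t)) (1 / a)) (lt_min (lt_min ht0 (by linarith)) (by positivity)) ?_ ?_
    · intro h ⟨hh0, hhδ⟩
      have hht : h ≤ t := le_trans hhδ (le_trans (min_le_left _ _) (min_le_left _ _))
      have hht1 : h ≤ 1 - t := le_trans hhδ (le_trans (min_le_left _ _) (min_le_right _ _))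
      have hha : h * a ≤ 1 := by
        have : h ≤ 1 / a := le_trans hhδ (min_le_right _ _)
        calc h * a ≤ (1 / a) * a := by nlinarith
          _ = 1 := by field_simp
      have hπ := Real.pi_gt_three
      have hsin : 0 < Real.sin (h * a) :=
        Real.sin_pos_of_pos_of_lt_pi (by positivity) (by linarith)
      have hcos : 0 < Real.cos (h * a) :=
        Real.cos_pos_of_mem_Ioo ⟨by nlinarith [mul_pos hh0 ha0], by linarith⟩
      have hs0 : t - h ∈ Set.Icc (0 : ℝ) 1 := ⟨by linarith, by linarith⟩
      have hs1 : t + h ∈ Set.Icc (0 : ℝ) 1 := ⟨by linarith, by linarith⟩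
      have hkey := hmid (t - h) hs0 (t + h) hs1
      rw [show (t - h + (t + h)) / 2 = t by ring,
        show |t - h - (t + h)| = 2 * h by
          rw [show t - h - (t + h) = -(2 * h) by ring, abs_neg, abs_of_pos (by linarith)]]
        at hkey
      have hσ : sigmaCoeff Λ (1 / 2) (2 * h) = 1 / (2 * Real.cos (h * a)) := by
        have hsq : (0 : ℝ) < Λ * (2 * h) ^ 2 := by positivity
        rw [sigmaCoeff, if_neg (ne_of_gt hsq), if_pos hsq]
        rw [show (1 / 2 : ℝ) * (2 * h * Real.sqrt Λ) = h * a by rw [← ha]; ring,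
          show 2 * h * Real.sqrt Λ = 2 * (h * a) by rw [← ha]; ring,
          Real.sin_two_mul]
        field_simp
      rw [hσ] at hkey
      have hcs : 0 < 2 * Real.cos (h * a) := by positivity
      rw [one_div, inv_mul_eq_div, le_div_iff₀ hcs] at hkey
      nlinarith
    · show f'' t - -(Real.cos (0 * a) * a) * a * f t < 0
      have : -(Real.cos (0 * a) * a) * a = -Λ := by simp [ha2]
      rw [this]; linarith
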